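/- For any 3-qubit density matrix ρ, the three-body sector length satisfies A_3(ρ) ≤ 4, with equality attained by the GHZ state (|000⟩+|111⟩)/√2. -/

import Mathlib

open Matrix BigOperators Finset ComplexOrder

/-- The Pauli matrices, indexed by `Fin 4`: identity, X, Y, Z. -/
noncomputable def pauli : Fin 4 → Matrix (Fin 2) (Fin 2) ℂ
  | 0 => 1
  | 1 => !![0, 1; 1, 0]
  | 2 => !![0, -Complex.I; Complex.I, 0]
  | 3 => !![1, 0; 0, -1]

/-- An `n`-qubit Pauli word: the tensor product of the Pauli matrices `pauli (w i)`,
realized as a matrix indexed by `Fin n → Fin 2`. -/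
noncomputable def pWord {n : ℕ} (w : Fin n → Fin 4) :
    Matrix (Fin n → Fin 2) (Fin n → Fin 2) ℂ :=
  Matrix.of fun x y => ∏ i, pauli (w i) (x i) (y i)

/-- The weight of a Pauli word: the number of non-identity tensor factors. -/
def wt {n : ℕ} (w : Fin n → Fin 4) : ℕ :=
  (Finset.univ.filter fun i => w i ≠ 0).card

/-- The `k`-th sector length of an `n`-qubit matrix:
the sum of squared Pauli expectation values over Pauli words of weight `k`. -/
noncomputable def sector (n k : ℕ) (ρ : Matrix (Fin n → Fin 2) (Fin n → Fin 2) ℂ) : ℝ :=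
  ∑ w ∈ Finset.univ.filter fun w : Fin n → Fin 4 => wt w = k,
    ((pWord w * ρ).trace.re) ^ 2

/-- An `n`-qubit quantum state: positive semidefinite with unit trace. -/
def IsState {n : ℕ} (ρ : Matrix (Fin n → Fin 2) (Fin n → Fin 2) ℂ) : Prop :=
  ρ.PosSemidef ∧ ρ.trace = 1

/-- The outer product `|ψ⟩⟨ψ|` of a vector with itself. -/
noncomputable def outer {n : ℕ} (ψ : (Fin n → Fin 2) → ℂ) :
    Matrix (Fin n → Fin 2) (Fin n → Fin 2) ℂ :=
  Matrix.of fun x y => ψ x * (starRingEnd ℂ) (ψ y)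

/-- The three-qubit GHZ state vector `(|000⟩ + |111⟩)/√2`. -/
noncomputable def ghzVec : (Fin 3 → Fin 2) → ℂ := fun x =>
  if x = (fun _ => 0) then (Real.sqrt 2 : ℂ)⁻¹
  else if x = (fun _ => 1) then (Real.sqrt 2 : ℂ)⁻¹ else 0

lemma pauli_comp (a b c d : Fin 2) :
    ∑ k : Fin 4, pauli k a b * pauli k c d
      = 2 * ((if a = d then 1 else 0) * (if b = c then 1 else 0)) := by
  fin_cases a <;> fin_cases b <;> fin_cases c <;> fin_cases d <;>
    simp [pauli, Fin.sum_univ_four, Matrix.one_apply] <;> ring_nf <;>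
    simp [Complex.I_sq] <;> ring

lemma pauli_conj (k : Fin 4) (a b : Fin 2) :
    (starRingEnd ℂ) (pauli k a b) = pauli k b a := by
  fin_cases k <;> fin_cases a <;> fin_cases b <;> simp [pauli, Matrix.one_apply]

lemma pauli_flip (k : Fin 4) (a b : Fin 2) :
    (pauli 2 * pauli k * pauli 2) a b = (if k = 0 then (1:ℂ) else -1) * pauli k b a := by
  fin_cases k <;> fin_cases a <;> fin_cases b <;>
    simp [pauli, Matrix.mul_apply, Fin.sum_univ_two, Matrix.one_apply] <;> ring_nf <;>
    simp [Complex.I_sq] <;> ring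

lemma pWord_sum_mul {n : ℕ} (x y u v : Fin n → Fin 2) :
    ∑ w : Fin n → Fin 4, pWord w x y * pWord w u v
      = 2 ^ n * ((if x = v then 1 else 0) * (if y = u then 1 else 0)) := by
  have h1 : ∀ w : Fin n → Fin 4, pWord w x y * pWord w u v
      = ∏ i, (pauli (w i) (x i) (y i) * pauli (w i) (u i) (v i)) := by
    intro w
    simp [pWord, Finset.prod_mul_distrib]
  simp_rw [h1]
  have h2 := Finset.prod_univ_sum (fun _ : Fin n => (Finset.univ : Finset (Fin 4)))
    (fun i k => pauli k (x i) (y i) * pauli k (u i) (v i))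
  rw [Fintype.piFinset_univ] at h2
  rw [← h2]
  simp_rw [pauli_comp]
  rw [Finset.prod_mul_distrib, Finset.prod_mul_distrib, Finset.prod_const,
    Finset.prod_boole, Finset.prod_boole]
  simp [Finset.card_univ, funext_iff]

lemma parseval (M N : Matrix (Fin 3 → Fin 2) (Fin 3 → Fin 2) ℂ) :
    ∑ w : Fin 3 → Fin 4, (pWord w * M).trace * (pWord w * N).trace
      = 8 * (M * N).trace := by
  have tr_eq : ∀ (P A : Matrix (Fin 3 → Fin 2) (Fin 3 → Fin 2) ℂ),
      (P * A).trace = ∑ p : (Fin 3 → Fin 2) × (Fin 3 → Fin 2), P p.1 p.2 * A p.2 p.1 := by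
    intro P A
    simp only [Matrix.trace, Matrix.diag, Matrix.mul_apply]
    rw [show (Finset.univ : Finset ((Fin 3 → Fin 2) × (Fin 3 → Fin 2)))
        = Finset.univ ×ˢ Finset.univ from (Finset.univ_product_univ).symm,
      Finset.sum_product]
  simp_rw [tr_eq, Finset.sum_mul_sum]
  rw [Finset.sum_comm]
  have : ∀ p : (Fin 3 → Fin 2) × (Fin 3 → Fin 2),
      ∑ w : Fin 3 → Fin 4, ∑ q : (Fin 3 → Fin 2) × (Fin 3 → Fin 2),
        (pWord w p.1 p.2 * M p.2 p.1) * (pWord w q.1 q.2 * N q.2 q.1)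
      = ∑ q : (Fin 3 → Fin 2) × (Fin 3 → Fin 2),
          (∑ w : Fin 3 → Fin 4, pWord w p.1 p.2 * pWord w q.1 q.2) * (M p.2 p.1 * N q.2 q.1) := by
    intro p
    rw [Finset.sum_comm]
    congr 1; ext q
    rw [Finset.sum_mul]
    congr 1; ext w
    ring
  simp_rw [this, pWord_sum_mul]
  have h8 : ((2:ℂ) ^ 3) = 8 := by norm_num
  simp_rw [h8, mul_ite, mul_one, mul_zero, ite_mul, zero_mul]
  simp [Fintype.sum_prod_type, Finset.mul_sum, Finset.sum_ite_eq, Finset.sum_ite_eq']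
  rw [Finset.sum_comm]

lemma pWord_isHermitian {n : ℕ} (w : Fin n → Fin 4) : (pWord w).IsHermitian := by
  ext x y
  simp only [Matrix.conjTranspose_apply, pWord, Matrix.of_apply]
  rw [show (star (∏ i, pauli (w i) (y i) (x i)))
      = (starRingEnd ℂ) (∏ i, pauli (w i) (y i) (x i)) from rfl, map_prod]
  simp [pauli_conj]

lemma trace_pWord_real {n : ℕ} {ρ : Matrix (Fin n → Fin 2) (Fin n → Fin 2) ℂ}
    (hρ : ρ.IsHermitian) (w : Fin n → Fin 4) :
    ((pWord w * ρ).trace) = (((pWord w * ρ).trace.re : ℝ) : ℂ) := by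
  have h : (starRingEnd ℂ) ((pWord w * ρ).trace) = (pWord w * ρ).trace := by
    calc (starRingEnd ℂ) ((pWord w * ρ).trace) = ((pWord w * ρ)ᴴ).trace := by
          rw [Matrix.trace_conjTranspose]; rfl
      _ = (ρᴴ * (pWord w)ᴴ).trace := by rw [Matrix.conjTranspose_mul]
      _ = (ρ * pWord w).trace := by rw [hρ.eq, (pWord_isHermitian w).eq]
      _ = (pWord w * ρ).trace := Matrix.trace_mul_comm _ _
  exact ((Complex.conj_eq_iff_re).mp h).symm

-- purity

lemma trace_sq_le_one {ρ : Matrix (Fin 3 → Fin 2) (Fin 3 → Fin 2) ℂ}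
    (h : IsState ρ) : (ρ * ρ).trace.re ≤ 1 := by
  obtain ⟨hpsd, htr⟩ := h
  have hH := hpsd.1
  have hspec := hH.spectral_theorem
  set U : Matrix (Fin 3 → Fin 2) (Fin 3 → Fin 2) ℂ := (hH.eigenvectorUnitary : Matrix (Fin 3 → Fin 2) (Fin 3 → Fin 2) ℂ) with hUdef
  set D : Matrix (Fin 3 → Fin 2) (Fin 3 → Fin 2) ℂ
    := Matrix.diagonal (RCLike.ofReal ∘ hH.eigenvalues) with hDdef
  have hU : star U * U = 1 := Matrix.mem_unitaryGroup_iff'.mp hH.eigenvectorUnitary.2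
  have hDtr : D.trace = ∑ i, (hH.eigenvalues i : ℂ) := by
    simp [hDdef, Matrix.trace_diagonal]
  have htrρ : ρ.trace = ∑ i, (hH.eigenvalues i : ℂ) := by
    conv_lhs => rw [hspec, Unitary.conjStarAlgAut_apply]
    rw [Matrix.trace_mul_comm, ← mul_assoc, hU, one_mul, hDtr]
  have hU' : ∀ X : Matrix (Fin 3 → Fin 2) (Fin 3 → Fin 2) ℂ,
      star U * (U * X) = X := fun X => by rw [← mul_assoc, hU, one_mul]
  have htrρ2 : (ρ * ρ).trace = ∑ i, ((hH.eigenvalues i : ℂ))^2 := by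
    conv_lhs => rw [hspec, Unitary.conjStarAlgAut_apply]
    simp only [mul_assoc]
    rw [hU', Matrix.trace_mul_comm]
    simp only [mul_assoc]
    rw [hU, mul_one]
    simp [hDdef, Matrix.diagonal_mul_diagonal, Matrix.trace_diagonal, sq]
  have hsum : ∑ i, hH.eigenvalues i = 1 := by
    have := htr
    rw [htrρ] at this
    exact_mod_cast this
  have hnn : ∀ i, 0 ≤ hH.eigenvalues i := hpsd.eigenvalues_nonneg
  have hle1 : ∀ i, hH.eigenvalues i ≤ 1 := by
    intro i
    rw [← hsum]
    exact Finset.single_le_sum (fun j _ => hnn j) (Finset.mem_univ i)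
  have : (ρ * ρ).trace.re = ∑ i, (hH.eigenvalues i)^2 := by
    rw [htrρ2, show ∑ i, ((hH.eigenvalues i:ℂ))^2
      = ((∑ i, (hH.eigenvalues i)^2 : ℝ) : ℂ) by push_cast; ring]
    rw [Complex.ofReal_re]
  rw [this]
  calc ∑ i, (hH.eigenvalues i)^2 ≤ ∑ i, hH.eigenvalues i := by
        apply Finset.sum_le_sum
        intro i _
        nlinarith [hnn i, hle1 i]
    _ = 1 := hsum

noncomputable def Fm : Matrix (Fin 3 → Fin 2) (Fin 3 → Fin 2) ℂ := pWord (fun _ => 2)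

noncomputable def tW {n : ℕ} (f : Fin n → Matrix (Fin 2) (Fin 2) ℂ) :
    Matrix (Fin n → Fin 2) (Fin n → Fin 2) ℂ :=
  Matrix.of fun x y => ∏ i, f i (x i) (y i)

lemma pWord_eq_tW {n : ℕ} (w : Fin n → Fin 4) : pWord w = tW (fun i => pauli (w i)) := rfl

lemma tW_mul {n : ℕ} (f g : Fin n → Matrix (Fin 2) (Fin 2) ℂ) :
    tW f * tW g = tW (fun i => f i * g i) := by
  ext x y
  simp only [tW, Matrix.mul_apply, Matrix.of_apply]
  have h2 := Finset.prod_univ_sum (fun _ : Fin n => (Finset.univ : Finset (Fin 2)))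
    (fun i a => f i (x i) a * g i a (y i))
  rw [Fintype.piFinset_univ] at h2
  simp_rw [← Finset.prod_mul_distrib]
  rw [h2]

lemma flip_pWord (w : Fin 3 → Fin 4) (x y : Fin 3 → Fin 2) :
    (Fm * pWord w * Fm) x y = ((-1:ℂ)) ^ (wt w) * pWord w y x := by
  have h1 : (Fm * pWord w * Fm) x y
      = ∏ i, (pauli 2 * pauli (w i) * pauli 2) (x i) (y i) := by
    rw [Fm, pWord_eq_tW, pWord_eq_tW, tW_mul, tW_mul]
    rfl
  rw [h1]
  simp_rw [pauli_flip]
  rw [Finset.prod_mul_distrib]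
  congr 1
  · rw [← Finset.prod_filter_mul_prod_filter_not Finset.univ (fun i => w i ≠ 0)]
    have : ∀ i ∈ Finset.univ.filter (fun i => w i ≠ 0),
        (if w i = 0 then (1:ℂ) else -1) = -1 := by
      intro i hi; simp at hi; simp [hi]
    rw [Finset.prod_congr rfl this, Finset.prod_const]
    have : ∀ i ∈ Finset.univ.filter (fun i => ¬ w i ≠ 0),
        (if w i = 0 then (1:ℂ) else -1) = 1 := by
      intro i hi; simp at hi; simp [hi]
    rw [Finset.prod_congr rfl this, Finset.prod_const, one_pow, mul_one, wt]

lemma trace_inv (ρ : Matrix (Fin 3 → Fin 2) (Fin 3 → Fin 2) ℂ) (w : Fin 3 → Fin 4) :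
    (pWord w * (Fm * ρᵀ * Fm)).trace = ((-1:ℂ)) ^ (wt w) * (pWord w * ρ).trace := by
  have hmat : (Fm * pWord w * Fm)ᵀ = ((-1:ℂ)) ^ (wt w) • pWord w := by
    ext x y
    rw [Matrix.transpose_apply, flip_pWord]
    simp
  calc (pWord w * (Fm * ρᵀ * Fm)).trace
      = ((pWord w * Fm * ρᵀ) * Fm).trace := by
        congr 1; simp only [mul_assoc]
    _ = (Fm * (pWord w * Fm * ρᵀ)).trace := Matrix.trace_mul_comm _ _
    _ = (Fm * pWord w * Fm * ρᵀ).trace := by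
        congr 1; simp only [mul_assoc]
    _ = ((Fm * pWord w * Fm * ρᵀ)ᵀ).trace := (Matrix.trace_transpose _).symm
    _ = (ρ * (Fm * pWord w * Fm)ᵀ).trace := by
        rw [Matrix.transpose_mul, Matrix.transpose_transpose]
    _ = ((-1:ℂ)) ^ (wt w) * (pWord w * ρ).trace := by
        rw [hmat, Matrix.mul_smul, Matrix.trace_smul, Matrix.trace_mul_comm]
        simp

lemma inv_posSemidef {ρ : Matrix (Fin 3 → Fin 2) (Fin 3 → Fin 2) ℂ}
    (h : ρ.PosSemidef) : (Fm * ρᵀ * Fm).PosSemidef := by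
  have h1 : ρᵀ.PosSemidef := h.transpose
  have hF : Fmᴴ = Fm := pWord_isHermitian _
  have := h1.mul_mul_conjTranspose_same Fm
  rwa [hF] at this

lemma psd_trace_re_nonneg {A : Matrix (Fin 3 → Fin 2) (Fin 3 → Fin 2) ℂ}
    (hA : A.PosSemidef) : 0 ≤ A.trace.re := by
  have hdiag : ∀ i, 0 ≤ (A i i).re := by
    intro i
    exact (Complex.le_def.mp hA.diag_nonneg).1
  rw [Matrix.trace]
  rw [Complex.re_sum]
  exact Finset.sum_nonneg fun i _ => hdiag i

open scoped MatrixOrder in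
lemma trace_mul_psd_nonneg {A B : Matrix (Fin 3 → Fin 2) (Fin 3 → Fin 2) ℂ}
    (hA : A.PosSemidef) (hB : B.PosSemidef) : 0 ≤ (A * B).trace.re := by
  have hs : CFC.sqrt A * CFC.sqrt A = A := CFC.sqrt_mul_sqrt_self A hA.nonneg
  have hH : (CFC.sqrt A).IsHermitian := (CFC.sqrt_nonneg A).posSemidef.1
  have key : (A * B).trace = (CFC.sqrt A * B * CFC.sqrt A).trace := by
    conv_lhs => rw [← hs]
    rw [mul_assoc, Matrix.trace_mul_comm]
  rw [key]
  apply psd_trace_re_nonneg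
  have := hB.mul_mul_conjTranspose_same (CFC.sqrt A)
  rwa [hH.eq] at this

lemma wt_le (w : Fin 3 → Fin 4) : wt w ≤ 3 := by
  have := Finset.card_filter_le (Finset.univ : Finset (Fin 3)) (fun i => w i ≠ 0)
  simpa [wt] using this

lemma sum_split (g : (Fin 3 → Fin 4) → ℝ) :
    ∑ w : Fin 3 → Fin 4, g w
      = ∑ k ∈ Finset.range 4, ∑ w ∈ Finset.univ.filter (fun w => wt w = k), g w :=
  (Finset.sum_fiberwise_of_maps_to
    (fun w _ => Finset.mem_range.mpr (lt_of_le_of_lt (wt_le w) (by norm_num))) g).symm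

lemma pWord_zero : pWord (fun _ : Fin 3 => (0 : Fin 4)) = 1 := by
  ext x y
  simp only [pWord, Matrix.of_apply, pauli, Matrix.one_apply]
  rw [Finset.prod_boole]
  simp [funext_iff]

lemma filter_wt_zero :
    (Finset.univ.filter fun w : Fin 3 → Fin 4 => wt w = 0)
      = {fun _ => 0} := by
  ext w
  simp [wt, Finset.card_eq_zero, Finset.filter_eq_empty_iff, funext_iff]

lemma sector_zero {ρ : Matrix (Fin 3 → Fin 2) (Fin 3 → Fin 2) ℂ}
    (h : ρ.trace = 1) : sector 3 0 ρ = 1 := by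
  rw [sector, filter_wt_zero, Finset.sum_singleton, pWord_zero, one_mul, h]
  norm_num

lemma sector_nonneg (k : ℕ) (ρ : Matrix (Fin 3 → Fin 2) (Fin 3 → Fin 2) ℂ) :
    0 ≤ sector 3 k ρ :=
  Finset.sum_nonneg fun _ _ => sq_nonneg _

theorem A3_bound (ρ : Matrix (Fin 3 → Fin 2) (Fin 3 → Fin 2) ℂ)
    (h : IsState ρ) : sector 3 3 ρ ≤ 4 := by
  obtain ⟨hpsd, htr⟩ := h
  have hH := hpsd.1
  set t : (Fin 3 → Fin 4) → ℝ := fun w => (pWord w * ρ).trace.re with ht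
  -- purity inequality
  have hpur : ∑ w : Fin 3 → Fin 4, (t w)^2 ≤ 8 := by
    have hC := parseval ρ ρ
    have : ∑ w : Fin 3 → Fin 4, (pWord w * ρ).trace * (pWord w * ρ).trace
        = ((∑ w : Fin 3 → Fin 4, (t w)^2 : ℝ) : ℂ) := by
      push_cast
      refine Finset.sum_congr rfl fun w _ => ?_
      rw [trace_pWord_real hH w]
      push_cast
      ring
    rw [this] at hC
    have h8 : (∑ w : Fin 3 → Fin 4, (t w)^2) = (8 * (ρ * ρ).trace).re := by
      rw [← hC, Complex.ofReal_re]
    rw [h8]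
    have := trace_sq_le_one ⟨hpsd, htr⟩
    simp only [Complex.mul_re]
    norm_num
    nlinarith [this]
  -- inversion inequality
  have hinv : 0 ≤ ∑ w : Fin 3 → Fin 4, ((-1:ℝ))^(wt w) * (t w)^2 := by
    have hC := parseval ρ (Fm * ρᵀ * Fm)
    have hrw : ∑ w : Fin 3 → Fin 4, (pWord w * ρ).trace * (pWord w * (Fm * ρᵀ * Fm)).trace
        = ((∑ w : Fin 3 → Fin 4, ((-1:ℝ))^(wt w) * (t w)^2 : ℝ) : ℂ) := by
      push_cast
      refine Finset.sum_congr rfl fun w _ => ?_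
      rw [trace_inv, trace_pWord_real hH w]
      push_cast
      ring
    rw [hrw] at hC
    have : (∑ w : Fin 3 → Fin 4, ((-1:ℝ))^(wt w) * (t w)^2)
        = (8 * (ρ * (Fm * ρᵀ * Fm)).trace).re := by rw [← hC, Complex.ofReal_re]
    rw [this]
    have hnn := trace_mul_psd_nonneg hpsd (inv_posSemidef hpsd)
    simp only [Complex.mul_re]
    norm_num
    nlinarith [hnn]
  -- decompose into sectors
  have hdec : ∑ w : Fin 3 → Fin 4, (t w)^2
      = sector 3 0 ρ + sector 3 1 ρ + sector 3 2 ρ + sector 3 3 ρ := by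
    rw [sum_split]
    simp [Finset.sum_range_succ, sector, ht]
  have hdec2 : ∑ w : Fin 3 → Fin 4, ((-1:ℝ))^(wt w) * (t w)^2
      = sector 3 0 ρ - sector 3 1 ρ + sector 3 2 ρ - sector 3 3 ρ := by
    rw [sum_split]
    have hfib : ∀ k, ∑ w ∈ Finset.univ.filter (fun w => wt w = k),
        ((-1:ℝ))^(wt w) * (t w)^2 = ((-1:ℝ))^k * sector 3 k ρ := by
      intro k
      rw [sector, Finset.mul_sum]
      refine Finset.sum_congr rfl fun w hw => ?_
      simp only [Finset.mem_filter] at hw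
      rw [hw.2]
    simp [Finset.sum_range_succ, hfib]
    ring
  have h0 := sector_zero htr
  have h1 := sector_nonneg 1 ρ
  have h2 := sector_nonneg 2 ρ
  have h3 := sector_nonneg 3 ρ
  rw [hdec, h0] at hpur
  rw [hdec2, h0] at hinv
  linarith

lemma ghz_trace (w : Fin 3 → Fin 4) :
    (pWord w * outer ghzVec).trace
      = (pWord w (fun _ => 0) (fun _ => 0) + pWord w (fun _ => 0) (fun _ => 1)
        + pWord w (fun _ => 1) (fun _ => 0) + pWord w (fun _ => 1) (fun _ => 1)) / 2 := by
  have hc : ((Real.sqrt 2 : ℂ))⁻¹ * (starRingEnd ℂ) ((Real.sqrt 2 : ℂ))⁻¹ = 1/2 := by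
    rw [show ((Real.sqrt 2 : ℝ) : ℂ)⁻¹ = (((Real.sqrt 2)⁻¹ : ℝ) : ℂ) by push_cast; ring]
    rw [Complex.conj_ofReal]
    rw [show (((Real.sqrt 2)⁻¹ : ℝ) : ℂ) * (((Real.sqrt 2)⁻¹ : ℝ) : ℂ)
        = (((Real.sqrt 2)⁻¹ * (Real.sqrt 2)⁻¹ : ℝ) : ℂ) by push_cast; ring]
    rw [← mul_inv, Real.mul_self_sqrt (by norm_num)]
    norm_num
  have hne : (fun _ => (0:Fin 2)) ≠ (fun _ : Fin 3 => (1:Fin 2)) := by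
    intro h; exact absurd (congrFun h 0) (by decide)
  have hreal : ∀ x, (starRingEnd ℂ) (ghzVec x) = ghzVec x := by
    intro x
    simp only [ghzVec]
    split_ifs <;> simp [Complex.conj_ofReal]
  have key : ∀ f : (Fin 3 → Fin 2) → ℂ,
      ∑ x : Fin 3 → Fin 2, ghzVec x * f x
        = (Real.sqrt 2 : ℂ)⁻¹ * (f (fun _ => 0) + f (fun _ => 1)) := by
    intro f
    calc ∑ x : Fin 3 → Fin 2, ghzVec x * f x
        = ∑ x : Fin 3 → Fin 2, ((if x = (fun _ => 0) then (Real.sqrt 2 : ℂ)⁻¹ * f x else 0)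
            + (if x = (fun _ => 1) then (Real.sqrt 2 : ℂ)⁻¹ * f x else 0)) := by
          refine Finset.sum_congr rfl fun x _ => ?_
          by_cases h0 : x = (fun _ => 0)
          · subst h0; simp [ghzVec, hne]
          · by_cases h1 : x = (fun _ => 1)
            · subst h1; simp [ghzVec, Ne.symm hne, hne]
            · simp [ghzVec, h0, h1]
      _ = (Real.sqrt 2 : ℂ)⁻¹ * (f (fun _ => 0) + f (fun _ => 1)) := by
          rw [Finset.sum_add_distrib, Finset.sum_ite_eq', Finset.sum_ite_eq']
          simp; ring
  have htr : (pWord w * outer ghzVec).trace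
      = ∑ x : Fin 3 → Fin 2, ghzVec x * ∑ y : Fin 3 → Fin 2, ghzVec y * pWord w x y := by
    rw [Matrix.trace]
    simp only [Matrix.diag, Matrix.mul_apply, outer, Matrix.of_apply]
    refine Finset.sum_congr rfl fun x _ => ?_
    rw [Finset.mul_sum]
    refine Finset.sum_congr rfl fun y _ => ?_
    rw [hreal x]
    ring
  have hc2 : ((Real.sqrt 2 : ℂ))⁻¹ * ((Real.sqrt 2 : ℂ))⁻¹ = 1/2 := by
    rw [← mul_inv, show ((Real.sqrt 2 : ℝ):ℂ) * ((Real.sqrt 2 : ℝ):ℂ)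
        = ((Real.sqrt 2 * Real.sqrt 2 : ℝ):ℂ) by push_cast; ring,
      Real.mul_self_sqrt (by norm_num)]
    norm_num
  rw [htr]
  simp_rw [key]
  linear_combination ((pWord w (fun _ => 0) fun _ => 0) + (pWord w (fun _ => 0) fun _ => 1)
    + (pWord w (fun _ => 1) fun _ => 0) + (pWord w (fun _ => 1) fun _ => 1)) * hc2

lemma sum_pi3 {M : Type*} [AddCommMonoid M] (g : (Fin 3 → Fin 4) → M) :
    ∑ w : Fin 3 → Fin 4, g w
      = ∑ a : Fin 4, ∑ b : Fin 4, ∑ c : Fin 4, g ![a, b, c] := by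
  let e : (Fin 3 → Fin 4) ≃ Fin 4 × Fin 4 × Fin 4 :=
    (Fin.consEquiv fun _ : Fin 3 => Fin 4).symm.trans (Equiv.prodCongrRight fun _ =>
      (Fin.consEquiv fun _ : Fin 2 => Fin 4).symm.trans (Equiv.prodCongrRight fun _ =>
        Equiv.funUnique (Fin 1) (Fin 4)))
  rw [← e.symm.sum_comp g, Fintype.sum_prod_type]
  refine Finset.sum_congr rfl fun a _ => ?_
  rw [Fintype.sum_prod_type]
  refine Finset.sum_congr rfl fun b _ => ?_
  refine Finset.sum_congr rfl fun c _ => ?_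
  congr 1
  funext i
  fin_cases i <;> rfl

lemma wt3_iff (a b c : Fin 4) :
    wt ![a, b, c] = 3 ↔ (a ≠ 0 ∧ b ≠ 0 ∧ c ≠ 0) := by
  revert a b c; decide

lemma ghz_sector : sector 3 3 (outer ghzVec) = 4 := by
  rw [sector, Finset.sum_filter]
  rw [sum_pi3 (fun w => if wt w = 3 then ((pWord w * outer ghzVec).trace.re)^2 else 0)]
  have hP : ∀ (w : Fin 3 → Fin 4) (x y : Fin 3 → Fin 2), pWord w x y
      = pauli (w 0) (x 0) (y 0) * (pauli (w 1) (x 1) (y 1) * pauli (w 2) (x 2) (y 2)) := by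
    intro w x y
    rw [pWord, Matrix.of_apply, Fin.prod_univ_three, mul_assoc]
  simp_rw [ghz_trace, wt3_iff, hP, show (2:ℂ) = ((2:ℝ):ℂ) by norm_num,
    Complex.div_ofReal_re]
  simp only [Fin.sum_univ_four, Matrix.cons_val_zero, Matrix.cons_val_one, Matrix.head_cons,
    Matrix.cons_val_two, Matrix.tail_cons]
  norm_num [pauli, Matrix.one_apply, Complex.add_re, Complex.add_im, Complex.mul_re,
    Complex.mul_im, Complex.I_re, Complex.I_im, Complex.one_re, Complex.one_im,
    Complex.neg_re, Complex.neg_im]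
  norm_num [show (2:Fin 4) ≠ 0 by decide]

/-- Every 3-qubit state satisfies `A₃(ρ) ≤ 4`, with equality attained by
the GHZ state `(|000⟩ + |111⟩)/√2`. -/
theorem three_qubit_A3_le_four :
    (∀ ρ : Matrix (Fin 3 → Fin 2) (Fin 3 → Fin 2) ℂ,
      IsState ρ → sector 3 3 ρ ≤ 4) ∧
    sector 3 3 (outer ghzVec) = 4 :=
  ⟨A3_bound, ghz_sector⟩
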